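/- Let J ≥ 1, let α₁, …, α_J be complex numbers in the open unit disk 𝔻, let G be holomorphic on an open neighborhood of the closed unit disk with G(z) ≠ 0 for all |z| ≤ 1, let B(z) = ∏_{j=1}^{J} (z − α_j)/(1 − \overline{α_j} z), and set F = B · G. Then ∫_𝔻 |F′(z)|² dA(z) = ∫_𝔻 |G′(z)|² dA(z) + (1/2) ∫₀^{2π} |G(e^{it})|² Σ_{j=1}^{J} (1 − |α_j|²)/|e^{it} − α_j|² dt, where dA denotes two-dimensional Lebesgue measure on the open unit disk 𝔻 ⊂ ℂ. -/

import Mathlib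

open Real MeasureTheory

open Real MeasureTheory Set intervalIntegral

@[fun_prop]
lemma diff_ofReal : Differentiable ℝ (fun x : ℝ => (x:ℂ)) := Complex.ofRealCLM.differentiable

lemma psymm (x y : ℝ) : Complex.polarCoord.symm (x, y) = (x : ℂ) * Complex.exp (Complex.I * y) := by
  simp [Complex.polarCoord_symm_apply, mul_comm Complex.I, Complex.exp_mul_I,
    ← Complex.ofReal_cos, ← Complex.ofReal_sin]

lemma normz (x y : ℝ) : ‖(x:ℂ) * Complex.exp (Complex.I * y)‖ = |x| := by
  simp [Complex.norm_exp, Complex.mul_re]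

lemma polar_step {R : ℝ} (hR : 1 < R) (h : ℂ → ℝ) (hc : ContinuousOn h (Metric.ball 0 R)) :
    ∫ z in Metric.ball (0:ℂ) 1, h z
      = ∫ x in (0:ℝ)..1, ∫ y in (0:ℝ)..(2*π), x * h ((x:ℂ) * Complex.exp (Complex.I*y)) := by
  set φ : ℝ × ℝ → ℝ := fun p => p.1 * h ((p.1:ℂ) * Complex.exp (Complex.I * p.2)) with hφ
  have hzc : Continuous fun p : ℝ × ℝ => (p.1:ℂ) * Complex.exp (Complex.I * p.2) := by
    fun_prop
  have hmaps : ∀ p : ℝ × ℝ, |p.1| ≤ 1 → (p.1:ℂ) * Complex.exp (Complex.I * p.2) ∈ Metric.ball (0:ℂ) R := by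
    intro p hp
    simp only [Metric.mem_ball, dist_zero_right, normz]
    linarith
  have hφcont : ContinuousOn φ ({x : ℝ | |x| ≤ 1} ×ˢ (univ : Set ℝ)) :=
    (continuous_fst.continuousOn).mul (hc.comp hzc.continuousOn (fun p hp => hmaps p hp.1))
  have hInt : IntegrableOn φ (Ioo (0:ℝ) 1 ×ˢ Ioo (-π) π) := by
    have : IntegrableOn φ (Icc (0:ℝ) 1 ×ˢ Icc (-π) π) := by
      apply (hφcont.mono ?_).integrableOn_compact (isCompact_Icc.prod isCompact_Icc)
      rintro ⟨x, y⟩ ⟨hx, hy⟩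
      exact ⟨by simpa [abs_le] using ⟨by linarith [hx.1], hx.2⟩, trivial⟩
    exact this.mono_set (prod_mono Ioo_subset_Icc_self Ioo_subset_Icc_self)
  have step1 : ∫ z in Metric.ball (0:ℂ) 1, h z = ∫ p in Ioo (0:ℝ) 1 ×ˢ Ioo (-π) π, φ p := by
    rw [← MeasureTheory.integral_indicator measurableSet_ball]
    rw [← Complex.integral_comp_polarCoord_symm (Set.indicator (Metric.ball 0 1) h)]
    have htarget : polarCoord.target = Ioi (0:ℝ) ×ˢ Ioo (-π) π := rfl
    rw [htarget]
    have key : ∀ p ∈ Ioi (0:ℝ) ×ˢ Ioo (-π) π,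
        p.1 • Set.indicator (Metric.ball (0:ℂ) 1) h (Complex.polarCoord.symm p)
          = Set.indicator (Iio (1:ℝ) ×ˢ (univ : Set ℝ)) φ p := by
      rintro ⟨x, y⟩ ⟨hx, hy⟩
      classical
      have hx' : (0:ℝ) < x := hx
      rw [smul_eq_mul, psymm x y, Set.indicator_apply, Set.indicator_apply]
      simp only [Metric.mem_ball, dist_zero_right, normz, Set.mem_prod, Set.mem_Iio,
        Set.mem_univ, and_true, abs_of_pos hx']
      by_cases h1 : x < 1 <;> simp [h1, hφ]
    rw [setIntegral_congr_fun (measurableSet_Ioi.prod measurableSet_Ioo) key,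
      setIntegral_indicator (measurableSet_Iio.prod MeasurableSet.univ)]
    congr 1
    rw [Set.prod_inter_prod]
    simp [Set.Ioi_inter_Iio, Set.Ioo]
  rw [step1, Measure.volume_eq_prod, setIntegral_prod φ (by rwa [← Measure.volume_eq_prod])]
  have inner : ∀ x : ℝ, ∫ y in Ioo (-π) π, φ (x, y) = ∫ y in (0:ℝ)..(2*π), φ (x, y) := by
    intro x
    have hper : Function.Periodic (fun y => φ (x, y)) (2*π) := by
      intro y
      have hexp : Complex.exp (Complex.I * (((y:ℝ) + 2*π) : ℝ)) = Complex.exp (Complex.I * y) := by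
        push_cast
        rw [mul_add, Complex.exp_add]
        simp [mul_comm Complex.I, Complex.exp_two_pi_mul_I]
      simp only [hφ, hexp]
    have h1 : ∫ y in Ioo (-π) π, φ (x, y) = ∫ y in (-π)..π, φ (x, y) := by
      rw [intervalIntegral.integral_of_le (by linarith [pi_pos]), integral_Ioc_eq_integral_Ioo]
    have h2 := hper.intervalIntegral_add_eq (-π) 0
    rw [h1]
    rw [show -π + 2*π = π by ring, show (0:ℝ) + 2*π = 2*π by ring] at h2
    exact h2
  simp_rw [inner]
  rw [intervalIntegral.integral_of_le zero_le_one, integral_Ioc_eq_integral_Ioo]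

lemma hasDerivAt_circle (t : ℝ) :
    HasDerivAt (fun y : ℝ => Complex.exp (Complex.I * y)) (Complex.I * Complex.exp (Complex.I * t)) t := by
  have h : HasDerivAt (fun y : ℝ => Complex.I * (y:ℂ)) Complex.I t := by
    simpa using (Complex.ofRealCLM.hasDerivAt (x := t)).const_mul Complex.I
  simpa [mul_comm] using h.cexp

section Green

variable {R : ℝ} {f : ℂ → ℂ}

lemma greenA (hR : 1 < R) (hf : DifferentiableOn ℂ f (Metric.ball 0 R)) :
    ((2 * ∫ z in Metric.ball (0:ℂ) 1, ‖deriv f z‖ ^ 2 : ℝ) : ℂ)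
      = ∫ t in (0:ℝ)..(2*π), Complex.exp (Complex.I*t) *
          ((starRingEnd ℂ) (f (Complex.exp (Complex.I*t))) * deriv f (Complex.exp (Complex.I*t))) := by
  have pipos := Real.pi_pos
  have hA : AnalyticOnNhd ℂ f (Metric.ball 0 R) := hf.analyticOnNhd Metric.isOpen_ball
  have hA' : AnalyticOnNhd ℂ (deriv f) (Metric.ball 0 R) := hA.deriv
  have hmem : ∀ z : ℂ, ‖z‖ < R → z ∈ Metric.ball (0:ℂ) R := fun z hz => by
    simpa [Metric.mem_ball, dist_zero_right] using hz
  have hfd : ∀ z : ℂ, ‖z‖ < R → HasDerivAt f (deriv f z) z := fun z hz =>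
    ((hA z (hmem z hz)).differentiableAt).hasDerivAt
  have hdd : ∀ z : ℂ, ‖z‖ < R → HasDerivAt (deriv f) (deriv (deriv f) z) z := fun z hz =>
    ((hA' z (hmem z hz)).differentiableAt).hasDerivAt
  set g : ℂ → ℂ := fun z => (starRingEnd ℂ) (f z) * deriv f z with hgdef
  set zc : ℝ × ℝ → ℂ := fun p => (p.1:ℂ) * Complex.exp (Complex.I * p.2) with hzcdef
  set P : ℝ × ℝ → ℂ := fun p => zc p * g (zc p) with hPdef
  set Q : ℝ × ℝ → ℂ := fun p => Complex.I * Complex.exp (Complex.I * p.2) * g (zc p) with hQdef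
  have hnormzc : ∀ p : ℝ × ℝ, ‖zc p‖ = |p.1| := fun p => normz p.1 p.2
  -- continuity
  have hzc : Continuous zc := by fun_prop
  have hExpCont : Continuous (fun p : ℝ × ℝ => Complex.exp (Complex.I * p.2)) := by fun_prop
  have hgc : ContinuousOn g (Metric.ball 0 R) :=
    (Complex.continuous_conj.comp_continuousOn hA.continuousOn).mul hA'.continuousOn
  have hmapsS : ∀ p : ℝ × ℝ, p ∈ ({x : ℝ | |x| ≤ 1} ×ˢ (univ : Set ℝ)) → zc p ∈ Metric.ball (0:ℂ) R := by
    rintro p ⟨hp, -⟩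
    simp only [Metric.mem_ball, dist_zero_right, hnormzc]
    exact lt_of_le_of_lt hp hR
  have hgzc : ContinuousOn (fun p => g (zc p)) ({x : ℝ | |x| ≤ 1} ×ˢ (univ : Set ℝ)) :=
    hgc.comp hzc.continuousOn hmapsS
  have hSsub : (uIcc (0:ℝ) 1) ×ˢ (uIcc (0:ℝ) (2*π)) ⊆ {x : ℝ | |x| ≤ 1} ×ˢ (univ : Set ℝ) := by
    rintro ⟨x, y⟩ ⟨hx, -⟩
    rw [uIcc_of_le zero_le_one] at hx
    exact ⟨abs_le.2 ⟨by linarith [hx.1], hx.2⟩, trivial⟩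
  -- differentiability
  have hzdiff : Differentiable ℝ zc := by
    rw [hzcdef]; fun_prop
  have hgd : ∀ z : ℂ, ‖z‖ < R → DifferentiableAt ℝ g z := by
    intro z hz
    have h1 : DifferentiableAt ℝ (fun w => (starRingEnd ℂ) (f w)) z := by
      have := Complex.conjCLE.differentiable.differentiableAt.comp z
        (((hfd z hz).differentiableAt).restrictScalars ℝ)
      simpa [Function.comp_def, Complex.conjCAE_apply] using this
    exact h1.mul (((hdd z hz).differentiableAt).restrictScalars ℝ)
  have hPdiffAt : ∀ p : ℝ × ℝ, ‖zc p‖ < R → DifferentiableAt ℝ P p := fun p hp =>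
    (hzdiff p).mul ((hgd (zc p) hp).comp p (hzdiff p))
  have hQdiffAt : ∀ p : ℝ × ℝ, ‖zc p‖ < R → DifferentiableAt ℝ Q p := by
    intro p hp
    have he : DifferentiableAt ℝ (fun p : ℝ × ℝ => Complex.I * Complex.exp (Complex.I * p.2)) p := by
      fun_prop
    exact he.mul ((hgd (zc p) hp).comp p (hzdiff p))
  -- divergence evaluation
  have hdiveval : ∀ p : ℝ × ℝ, ‖zc p‖ < R →
      fderiv ℝ P p (1, 0) + fderiv ℝ Q p (0, 1)
        = ((2 * p.1 * ‖deriv f (zc p)‖ ^ 2 : ℝ) : ℂ) := by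
    intro p hzp
    have hzre : zc p = (p.1 : ℂ) * Complex.exp (Complex.I * p.2) := rfl
    set e := Complex.exp (Complex.I * p.2) with he
    set d := deriv f (zc p) with hd
    set c := deriv (deriv f) (zc p) with hc
    -- P slice
    have hcurve1 : HasDerivAt (fun x : ℝ => (x:ℂ) * e) e p.1 := by
      simpa using (Complex.ofRealCLM.hasDerivAt (x := p.1)).mul_const e
    have hfc1 : HasDerivAt (fun x : ℝ => f ((x:ℂ) * e)) (e • d) p.1 :=
      (hfd (zc p) hzp).scomp p.1 hcurve1
    have hconj1 : HasDerivAt (fun x : ℝ => (starRingEnd ℂ) (f ((x:ℂ) * e)))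
        ((starRingEnd ℂ) (e • d)) p.1 := by
      simpa [Function.comp_def, Complex.conjCAE_apply] using
        Complex.conjCLE.hasFDerivAt.comp_hasDerivAt p.1 hfc1
    have hd1 : HasDerivAt (fun x : ℝ => deriv f ((x:ℂ) * e)) (e • c) p.1 :=
      (hdd (zc p) hzp).scomp (g₁ := deriv f) p.1 hcurve1
    have hg1 : HasDerivAt (fun x : ℝ => g ((x:ℂ) * e))
        ((starRingEnd ℂ) (e • d) * d + (starRingEnd ℂ) (f (zc p)) * (e • c)) p.1 :=
      hconj1.mul hd1
    have hP1 : HasDerivAt (fun x : ℝ => P (x, p.2))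
        (e * g (zc p) + zc p * ((starRingEnd ℂ) (e • d) * d
          + (starRingEnd ℂ) (f (zc p)) * (e • c))) p.1 := hcurve1.mul hg1
    -- Q slice
    have hE : HasDerivAt (fun y : ℝ => Complex.exp (Complex.I * y)) (Complex.I * e) p.2 :=
      hasDerivAt_circle p.2
    have hcurve2 : HasDerivAt (fun y : ℝ => (p.1:ℂ) * Complex.exp (Complex.I * y))
        ((p.1:ℂ) * (Complex.I * e)) p.2 := hE.const_mul _
    have hfc2 : HasDerivAt (fun y : ℝ => f ((p.1:ℂ) * Complex.exp (Complex.I * y)))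
        (((p.1:ℂ) * (Complex.I * e)) • d) p.2 :=
      (hfd (zc p) hzp).scomp p.2 hcurve2
    have hconj2 : HasDerivAt (fun y : ℝ => (starRingEnd ℂ) (f ((p.1:ℂ) * Complex.exp (Complex.I * y))))
        ((starRingEnd ℂ) (((p.1:ℂ) * (Complex.I * e)) • d)) p.2 := by
      simpa [Function.comp_def, Complex.conjCAE_apply] using
        Complex.conjCLE.hasFDerivAt.comp_hasDerivAt p.2 hfc2
    have hd2 : HasDerivAt (fun y : ℝ => deriv f ((p.1:ℂ) * Complex.exp (Complex.I * y)))
        (((p.1:ℂ) * (Complex.I * e)) • c) p.2 :=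
      (hdd (zc p) hzp).scomp (g₁ := deriv f) p.2 hcurve2
    have hg2 : HasDerivAt (fun y : ℝ => g ((p.1:ℂ) * Complex.exp (Complex.I * y)))
        ((starRingEnd ℂ) (((p.1:ℂ) * (Complex.I * e)) • d) * d
          + (starRingEnd ℂ) (f (zc p)) * (((p.1:ℂ) * (Complex.I * e)) • c)) p.2 :=
      hconj2.mul hd2
    have hQ2 : HasDerivAt (fun y : ℝ => Q (p.1, y))
        (Complex.I * (Complex.I * e) * g (zc p) + Complex.I * e *
          ((starRingEnd ℂ) (((p.1:ℂ) * (Complex.I * e)) • d) * d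
            + (starRingEnd ℂ) (f (zc p)) * (((p.1:ℂ) * (Complex.I * e)) • c))) p.2 :=
      (hE.const_mul Complex.I).mul hg2
    -- link with fderiv
    have l1 : HasDerivAt (fun x : ℝ => P (x, p.2)) (fderiv ℝ P p (1, 0)) p.1 :=
      (hPdiffAt p hzp).hasFDerivAt.comp_hasDerivAt (l := P) p.1
        ((hasDerivAt_id p.1).prodMk (hasDerivAt_const p.1 p.2))
    have l2 : HasDerivAt (fun y : ℝ => Q (p.1, y)) (fderiv ℝ Q p (0, 1)) p.2 :=
      (hQdiffAt p hzp).hasFDerivAt.comp_hasDerivAt (l := Q) p.2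
        ((hasDerivAt_const p.2 p.1).prodMk (hasDerivAt_id p.2))
    rw [l1.unique hP1, l2.unique hQ2]
    have hE' : (starRingEnd ℂ) e = Complex.exp (-(Complex.I * p.2)) := by
      rw [he, ← Complex.exp_conj]
      congr 1
      simp [Complex.conj_ofReal]
    have hee : e * Complex.exp (-(Complex.I * p.2)) = 1 := by
      rw [he, ← Complex.exp_add]
      simp
    have hnd : ((‖d‖ ^ 2 : ℝ) : ℂ) = d * (starRingEnd ℂ) d := by
      rw [Complex.mul_conj, Complex.normSq_eq_norm_sq]
    rw [show ((2 * p.1 * ‖d‖ ^ 2 : ℝ) : ℂ) = 2 * (p.1:ℂ) * ((‖d‖ ^ 2 : ℝ) : ℂ) by push_cast; ring,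
      hnd]
    simp only [smul_eq_mul, map_mul, Complex.conj_I, Complex.conj_ofReal, hE', hgdef, hzre]
    ring_nf
    simp only [Complex.I_sq]
    ring_nf
    linear_combination (2 * (p.1:ℂ) * ((starRingEnd ℂ) d * d)) * hee
  -- continuity hypotheses for the divergence theorem
  have HcP : ContinuousOn P ((uIcc (0:ℝ) 1) ×ˢ (uIcc (0:ℝ) (2*π))) :=
    (hzc.continuousOn.mul hgzc).mono hSsub
  have HcQ : ContinuousOn Q ((uIcc (0:ℝ) 1) ×ˢ (uIcc (0:ℝ) (2*π))) :=
    (((continuous_const.mul hExpCont).continuousOn).mul hgzc).mono hSsub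
  have hzlt : ∀ x : ℝ × ℝ, x.1 ∈ Ioo (min (0:ℝ) 1) (max (0:ℝ) 1) → ‖zc x‖ < R := by
    intro x hx
    rw [min_eq_left zero_le_one, max_eq_right zero_le_one] at hx
    rw [hnormzc]
    have : |x.1| ≤ 1 := abs_le.2 ⟨by linarith [hx.1], le_of_lt hx.2⟩
    exact lt_of_le_of_lt this hR
  have HdP : ∀ x ∈ (Ioo (min (0:ℝ) 1) (max (0:ℝ) 1)) ×ˢ
      (Ioo (min (0:ℝ) (2*π)) (max (0:ℝ) (2*π))) \ (∅ : Set (ℝ × ℝ)),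
      HasFDerivAt P (fderiv ℝ P x) x := by
    rintro x ⟨⟨hx1, -⟩, -⟩
    exact (hPdiffAt x (hzlt x hx1)).hasFDerivAt
  have HdQ : ∀ x ∈ (Ioo (min (0:ℝ) 1) (max (0:ℝ) 1)) ×ˢ
      (Ioo (min (0:ℝ) (2*π)) (max (0:ℝ) (2*π))) \ (∅ : Set (ℝ × ℝ)),
      HasFDerivAt Q (fderiv ℝ Q x) x := by
    rintro x ⟨⟨hx1, -⟩, -⟩
    exact (hQdiffAt x (hzlt x hx1)).hasFDerivAt
  have Hi : IntegrableOn (fun x : ℝ × ℝ => fderiv ℝ P x (1, 0) + fderiv ℝ Q x (0, 1))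
      ((uIcc (0:ℝ) 1) ×ˢ (uIcc (0:ℝ) (2*π))) := by
    have hcont2 : ContinuousOn (fun p : ℝ × ℝ => ((2 * p.1 * ‖deriv f (zc p)‖ ^ 2 : ℝ) : ℂ))
        ({x : ℝ | |x| ≤ 1} ×ˢ (univ : Set ℝ)) := by
      apply Complex.continuous_ofReal.comp_continuousOn
      apply ContinuousOn.mul
      · exact (continuous_const.mul continuous_fst).continuousOn
      · exact ((hA'.continuousOn.comp hzc.continuousOn hmapsS).norm).pow 2
    have hInt2 : IntegrableOn (fun p : ℝ × ℝ => ((2 * p.1 * ‖deriv f (zc p)‖ ^ 2 : ℝ) : ℂ)) ((uIcc (0:ℝ) 1) ×ˢ (uIcc (0:ℝ) (2*π))) volume :=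
      (hcont2.mono hSsub).integrableOn_compact (isCompact_uIcc.prod isCompact_uIcc)
    apply hInt2.congr_fun ?_ ((measurableSet_uIcc).prod measurableSet_uIcc)
    intro x hx
    have hxR : ‖zc x‖ < R := by
      rw [hnormzc]
      exact lt_of_le_of_lt (hSsub hx).1 hR
    exact (hdiveval x hxR).symm
  have key := integral2_divergence_prod_of_hasFDerivAt_off_countable P Q
      (fun p => fderiv ℝ P p) (fun p => fderiv ℝ Q p) 0 0 1 (2*π) ∅ Set.countable_empty
      HcP HcQ HdP HdQ Hi
  -- boundary term simplifications
  have hexp2pi : Complex.exp (Complex.I * ((2*π : ℝ) : ℂ)) = 1 := by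
    push_cast
    rw [mul_comm]
    exact Complex.exp_two_pi_mul_I
  have e1 : (∫ x in (0:ℝ)..1, Q (x, 2*π)) = ∫ x in (0:ℝ)..1, Q (x, 0) := by
    apply intervalIntegral.integral_congr
    intro x _
    show Q (x, 2*π) = Q (x, 0)
    simp only [hQdef, hzcdef, hexp2pi]
    norm_num
  have e2 : (∫ y in (0:ℝ)..(2*π), P (0, y)) = 0 := by
    have : ∀ y ∈ uIcc (0:ℝ) (2*π), P (0, y) = 0 := by
      intro y _
      show P (0, y) = 0
      simp [hPdef, hzcdef]
    rw [intervalIntegral.integral_congr this, intervalIntegral.integral_zero]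
  have e3 : ∀ y ∈ uIcc (0:ℝ) (2*π), P (1, y) = Complex.exp (Complex.I * y) *
      ((starRingEnd ℂ) (f (Complex.exp (Complex.I * y))) * deriv f (Complex.exp (Complex.I * y))) := by
    intro y _
    show P (1, y) = _
    simp [hPdef, hzcdef, hgdef]
  -- the LHS of `key` is the Dirichlet integral
  have hpolar := polar_step hR (fun z => ‖deriv f z‖ ^ 2) ((hA'.continuousOn.norm).pow 2)
  have hLHS : (∫ x in (0:ℝ)..1, ∫ y in (0:ℝ)..(2*π),
        fderiv ℝ P (x, y) (1, 0) + fderiv ℝ Q (x, y) (0, 1))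
      = ((2 * ∫ z in Metric.ball (0:ℂ) 1, ‖deriv f z‖ ^ 2 : ℝ) : ℂ) := by
    have stepA : ∀ x ∈ uIcc (0:ℝ) 1,
        (∫ y in (0:ℝ)..(2*π), fderiv ℝ P (x, y) (1, 0) + fderiv ℝ Q (x, y) (0, 1))
          = ((∫ y in (0:ℝ)..(2*π), 2 * x * ‖deriv f ((x:ℂ) * Complex.exp (Complex.I * y))‖ ^ 2 : ℝ) : ℂ) := by
      intro x hx
      rw [← intervalIntegral.integral_ofReal]
      apply intervalIntegral.integral_congr
      intro y _
      have hxle : |x| ≤ 1 := by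
        rw [uIcc_of_le zero_le_one] at hx
        exact abs_le.2 ⟨by linarith [hx.1], hx.2⟩
      exact hdiveval (x, y) (by rw [hnormzc]; exact lt_of_le_of_lt hxle hR)
    rw [intervalIntegral.integral_congr stepA, intervalIntegral.integral_ofReal]
    congr 1
    rw [hpolar, ← intervalIntegral.integral_const_mul]
    apply intervalIntegral.integral_congr
    intro x _
    show _ = 2 * ∫ y in (0:ℝ)..(2*π), x * ‖deriv f ((x:ℂ) * Complex.exp (Complex.I * y))‖ ^ 2
    rw [← intervalIntegral.integral_const_mul]
    apply intervalIntegral.integral_congr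
    intro y _
    show 2 * x * _ = 2 * (x * _)
    ring
  rw [hLHS, e1, e2, sub_zero, sub_self, zero_add, intervalIntegral.integral_congr e3] at key
  exact key

end Green
open Real MeasureTheory Set

lemma blaschke_deriv {α w : ℂ} (hden : 1 - (starRingEnd ℂ) α * w ≠ 0) :
    HasDerivAt (fun z => (z - α) / (1 - (starRingEnd ℂ) α * z))
      ((1 - (starRingEnd ℂ) α * α) / (1 - (starRingEnd ℂ) α * w) ^ 2) w := by
  have h1 : HasDerivAt (fun z : ℂ => z - α) 1 w := (hasDerivAt_id w).sub_const α
  have h2 : HasDerivAt (fun z : ℂ => 1 - (starRingEnd ℂ) α * z) (-((starRingEnd ℂ) α)) w := by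
    simpa using ((hasDerivAt_id w).const_mul ((starRingEnd ℂ) α)).const_sub 1
  have h := h1.fun_div h2 hden
  refine h.congr_deriv ?_
  congr 1
  ring

lemma boundary_pt {J : ℕ} (α : Fin J → ℂ) (hα : ∀ j, ‖α j‖ < 1) (G : ℂ → ℂ) (w : ℂ)
    (hw : ‖w‖ = 1) (hGd : DifferentiableAt ℂ G w) :
    w * ((starRingEnd ℂ) ((∏ j, (w - α j) / (1 - (starRingEnd ℂ) (α j) * w)) * G w) *
        deriv (fun z => (∏ j, (z - α j) / (1 - (starRingEnd ℂ) (α j) * z)) * G z) w)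
      - w * ((starRingEnd ℂ) (G w) * deriv G w)
    = ((‖G w‖ ^ 2 * ∑ j, (1 - ‖α j‖ ^ 2) / ‖w - α j‖ ^ 2 : ℝ) : ℂ) := by
  have hw0 : w ≠ 0 := by
    intro h; rw [h] at hw; simp at hw
  have hwc : w * (starRingEnd ℂ) w = 1 := by
    rw [Complex.mul_conj, Complex.normSq_eq_norm_sq, hw]
    norm_num
  have hcw : (starRingEnd ℂ) w = w⁻¹ := eq_inv_of_mul_eq_one_left (by linear_combination hwc)
  have hden : ∀ j, 1 - (starRingEnd ℂ) (α j) * w ≠ 0 := by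
    intro j h
    have h2 : ‖(1:ℂ)‖ = ‖(starRingEnd ℂ) (α j) * w‖ := by
      rw [sub_eq_zero] at h; rw [h]
    simp only [norm_one, norm_mul, RCLike.norm_conj, hw, mul_one] at h2
    exact absurd h2.symm (ne_of_lt (hα j))
  have hsub : ∀ j, w - α j ≠ 0 := by
    intro j h
    rw [sub_eq_zero] at h
    rw [h] at hw
    exact absurd hw (ne_of_lt (hα j))
  have hden' : ∀ j, (1 : ℂ) - α j * w⁻¹ ≠ 0 := by
    intro j
    have h := (map_ne_zero (starRingEnd ℂ)).mpr (hden j)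
    simpa only [map_sub, map_mul, map_one, Complex.conj_conj, hcw] using h
  -- unimodularity of each factor
  have hcne : ∀ j, (starRingEnd ℂ) (1 - (starRingEnd ℂ) (α j) * w) ≠ 0 := fun j =>
    (map_ne_zero (starRingEnd ℂ)).mpr (hden j)
  have hsubc : ∀ j, (starRingEnd ℂ) (w - α j) ≠ 0 := fun j =>
    (map_ne_zero (starRingEnd ℂ)).mpr (hsub j)
  have hb1 : ∀ j, (starRingEnd ℂ) ((w - α j) / (1 - (starRingEnd ℂ) (α j) * w)) *
      ((w - α j) / (1 - (starRingEnd ℂ) (α j) * w)) = 1 := by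
    intro j
    rw [map_div₀, div_mul_div_comm,
      div_eq_one_iff_eq (mul_ne_zero (hcne j) (hden j))]
    simp only [map_sub, map_mul, map_one, Complex.conj_conj, hcw]
    field_simp
  -- the per-factor boundary term
  have hterm : ∀ j, w * ((starRingEnd ℂ) ((w - α j) / (1 - (starRingEnd ℂ) (α j) * w)) *
      ((1 - (starRingEnd ℂ) (α j) * α j) / (1 - (starRingEnd ℂ) (α j) * w) ^ 2))
      = (((1 - ‖α j‖ ^ 2) / ‖w - α j‖ ^ 2 : ℝ) : ℂ) := by
    intro j
    have n1 : ((‖α j‖ ^ 2 : ℝ) : ℂ) = α j * (starRingEnd ℂ) (α j) := by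
      rw [Complex.mul_conj, Complex.normSq_eq_norm_sq]
    have n2 : ((‖w - α j‖ ^ 2 : ℝ) : ℂ) = (w - α j) * (w⁻¹ - (starRingEnd ℂ) (α j)) := by
      rw [show w⁻¹ - (starRingEnd ℂ) (α j) = (starRingEnd ℂ) (w - α j) by rw [map_sub, hcw],
        Complex.mul_conj, Complex.normSq_eq_norm_sq]
    have hsub' : w⁻¹ - (starRingEnd ℂ) (α j) ≠ 0 := by
      rw [show w⁻¹ - (starRingEnd ℂ) (α j) = (starRingEnd ℂ) (w - α j) by rw [map_sub, hcw]]
      exact (map_ne_zero (starRingEnd ℂ)).mpr (hsub j)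
    have n2' : ((‖w - α j‖ ^ 2 : ℝ) : ℂ) = (w - α j) * (starRingEnd ℂ) (w - α j) := by
      rw [Complex.mul_conj, Complex.normSq_eq_norm_sq]
    have hn2 : ((‖w - α j‖ ^ 2 : ℝ) : ℂ) ≠ 0 := by
      rw [n2']; exact mul_ne_zero (hsub j) (hsubc j)
    rw [Complex.ofReal_div, Complex.ofReal_sub, Complex.ofReal_one, n1, n2', map_div₀,
      div_mul_div_comm, mul_div_assoc',
      div_eq_div_iff (mul_ne_zero (hcne j) (pow_ne_zero 2 (hden j)))
        (mul_ne_zero (hsub j) (hsubc j))]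
    simp only [map_sub, map_mul, map_one, Complex.conj_conj, hcw]
    field_simp
  -- derivative of the Blaschke product
  have hBd : HasDerivAt (fun z => ∏ j, (z - α j) / (1 - (starRingEnd ℂ) (α j) * z))
      (∑ j, (∏ k ∈ Finset.univ.erase j, (w - α k) / (1 - (starRingEnd ℂ) (α k) * w)) *
        ((1 - (starRingEnd ℂ) (α j) * α j) / (1 - (starRingEnd ℂ) (α j) * w) ^ 2)) w := by
    have h := HasDerivAt.fun_finset_prod (u := Finset.univ)
      (f := fun j (z : ℂ) => (z - α j) / (1 - (starRingEnd ℂ) (α j) * z))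
      (f' := fun j => (1 - (starRingEnd ℂ) (α j) * α j) / (1 - (starRingEnd ℂ) (α j) * w) ^ 2)
      (fun j _ => blaschke_deriv (hden j))
    simpa [smul_eq_mul] using h
  have hder : deriv (fun z => (∏ j, (z - α j) / (1 - (starRingEnd ℂ) (α j) * z)) * G z) w
      = (∑ j, (∏ k ∈ Finset.univ.erase j, (w - α k) / (1 - (starRingEnd ℂ) (α k) * w)) *
          ((1 - (starRingEnd ℂ) (α j) * α j) / (1 - (starRingEnd ℂ) (α j) * w) ^ 2)) * G w
        + (∏ j, (w - α j) / (1 - (starRingEnd ℂ) (α j) * w)) * deriv G w :=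
    (hBd.mul hGd.hasDerivAt).deriv
  rw [hder, map_mul]
  have hGG : (starRingEnd ℂ) (G w) * G w = ((‖G w‖ ^ 2 : ℝ) : ℂ) := by
    rw [mul_comm, Complex.mul_conj, Complex.normSq_eq_norm_sq]
  have hBB : (starRingEnd ℂ) (∏ j, (w - α j) / (1 - (starRingEnd ℂ) (α j) * w)) *
      (∏ j, (w - α j) / (1 - (starRingEnd ℂ) (α j) * w)) = 1 := by
    rw [map_prod, ← Finset.prod_mul_distrib]
    exact Finset.prod_eq_one fun j _ => hb1 j
  have hremain : ∀ j, (starRingEnd ℂ) (∏ k, (w - α k) / (1 - (starRingEnd ℂ) (α k) * w)) *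
      (∏ k ∈ Finset.univ.erase j, (w - α k) / (1 - (starRingEnd ℂ) (α k) * w))
      = (starRingEnd ℂ) ((w - α j) / (1 - (starRingEnd ℂ) (α j) * w)) := by
    intro j
    rw [map_prod, ← Finset.mul_prod_erase Finset.univ _ (Finset.mem_univ j), mul_assoc,
      ← Finset.prod_mul_distrib, Finset.prod_congr rfl (fun k _ => hb1 k),
      Finset.prod_const_one, mul_one]
  have hX : w * ((starRingEnd ℂ) (∏ j, (w - α j) / (1 - (starRingEnd ℂ) (α j) * w)) *
      (∑ j, (∏ k ∈ Finset.univ.erase j, (w - α k) / (1 - (starRingEnd ℂ) (α k) * w)) *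
        ((1 - (starRingEnd ℂ) (α j) * α j) / (1 - (starRingEnd ℂ) (α j) * w) ^ 2)))
      = ((∑ j, (1 - ‖α j‖ ^ 2) / ‖w - α j‖ ^ 2 : ℝ) : ℂ) := by
    rw [Complex.ofReal_sum, Finset.mul_sum, Finset.mul_sum]
    apply Finset.sum_congr rfl
    intro j _
    linear_combination (w * ((1 - (starRingEnd ℂ) (α j) * α j) /
      (1 - (starRingEnd ℂ) (α j) * w) ^ 2)) * hremain j + hterm j
  rw [Complex.ofReal_mul]
  linear_combination ((starRingEnd ℂ) (G w) * G w) * hX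
    + (w * ((starRingEnd ℂ) (G w) * deriv G w)) * hBB
    + ((∑ j, (1 - ‖α j‖ ^ 2) / ‖w - α j‖ ^ 2 : ℝ) : ℂ) * hGG
open Real MeasureTheory Set

section Main

lemma norm_exp_I (t : ℝ) : ‖Complex.exp (Complex.I * t)‖ = 1 := by
  simp [Complex.norm_exp, Complex.mul_re]

set_option maxHeartbeats 1000000 in
/-- Special case of Carleson's formula: for `F = B·G` with `B` a finite Blaschke product with
zeros `α₁,…,α_J` in the open unit disk and `G` holomorphic and zero-free on a neighborhood of
the closed unit disk, the Dirichlet integral of `F` equals that of `G` plus the boundary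
correction term. -/
theorem carleson_formula (J : ℕ) (hJ : 1 ≤ J) (α : Fin J → ℂ) (hα : ∀ j, ‖α j‖ < 1)
    (G : ℂ → ℂ) (U : Set ℂ) (hU : IsOpen U) (hUc : Metric.closedBall (0:ℂ) 1 ⊆ U)
    (hG : DifferentiableOn ℂ G U) (hGne : ∀ z : ℂ, ‖z‖ ≤ 1 → G z ≠ 0)
    (B F : ℂ → ℂ)
    (hB : ∀ z, B z = ∏ j, (z - α j) / (1 - (starRingEnd ℂ) (α j) * z))
    (hF : ∀ z, F z = B z * G z) :
    (∫ z in Metric.ball (0:ℂ) 1, ‖deriv F z‖ ^ 2) =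
      (∫ z in Metric.ball (0:ℂ) 1, ‖deriv G z‖ ^ 2) +
        (1 / 2) * ∫ t in (0:ℝ)..(2 * π),
          ‖G (Complex.exp (Complex.I * t))‖ ^ 2 *
            ∑ j, (1 - ‖α j‖ ^ 2) / ‖Complex.exp (Complex.I * t) - α j‖ ^ 2 := by
  have hFfun : F = fun z => (∏ j, (z - α j) / (1 - (starRingEnd ℂ) (α j) * z)) * G z := by
    funext z; rw [hF z, hB z]
  -- choose a radius R with 1 < R
  obtain ⟨δ, hδ0, hδsub⟩ := (isCompact_closedBall (0:ℂ) 1).exists_cthickening_subset_open hU hUc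
  haveI : Nonempty (Fin J) := ⟨⟨0, hJ⟩⟩
  set M : ℝ := Finset.univ.sup' Finset.univ_nonempty (fun j => ‖α j‖) with hMdef
  have hM1 : M < 1 := by
    rw [Finset.sup'_lt_iff]
    exact fun j _ => hα j
  have hM0 : 0 ≤ M :=
    le_trans (norm_nonneg (α ⟨0, hJ⟩)) (Finset.le_sup' (fun j => ‖α j‖) (Finset.mem_univ ⟨0, hJ⟩))
  set R : ℝ := min (1 + δ) (2 / (1 + M)) with hRdef
  have hR1 : 1 < R := by
    apply lt_min (by linarith)
    rw [lt_div_iff₀ (by linarith)]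
    linarith
  have hMR : M * R < 1 := by
    calc M * R ≤ M * (2 / (1 + M)) := by
          exact mul_le_mul_of_nonneg_left (min_le_right _ _) hM0
    _ < 1 := by
          rw [mul_div_assoc', div_lt_one (by linarith)]
          linarith
  have hballU : Metric.ball (0:ℂ) R ⊆ U := by
    intro z hz
    apply hδsub
    rw [cthickening_closedBall hδ0.le zero_le_one, Metric.mem_closedBall]
    rw [Metric.mem_ball] at hz
    have h1 : R ≤ 1 + δ := min_le_left _ _
    linarith
  have hdenne : ∀ (j : Fin J) (z : ℂ), z ∈ Metric.ball (0:ℂ) R →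
      1 - (starRingEnd ℂ) (α j) * z ≠ 0 := by
    intro j z hz h
    rw [Metric.mem_ball, dist_zero_right] at hz
    have h1 : (1:ℝ) = ‖(starRingEnd ℂ) (α j) * z‖ := by
      rw [sub_eq_zero] at h
      rw [← h, norm_one]
    rw [norm_mul, RCLike.norm_conj] at h1
    have h2 : ‖α j‖ * ‖z‖ ≤ M * R :=
      mul_le_mul (Finset.le_sup' (fun j => ‖α j‖) (Finset.mem_univ j)) hz.le (norm_nonneg z) hM0
    linarith
  -- differentiability
  have hGd : DifferentiableOn ℂ G (Metric.ball 0 R) := hG.mono hballU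
  have hBdiff : DifferentiableOn ℂ
      (fun z => ∏ j, (z - α j) / (1 - (starRingEnd ℂ) (α j) * z)) (Metric.ball 0 R) := by
    intro z hz
    exact (HasDerivAt.fun_finset_prod
      (fun j (_ : j ∈ Finset.univ) => blaschke_deriv (hdenne j z hz))).differentiableAt.differentiableWithinAt
  have hFdiff : DifferentiableOn ℂ
      (fun z => (∏ j, (z - α j) / (1 - (starRingEnd ℂ) (α j) * z)) * G z)
      (Metric.ball 0 R) := hBdiff.mul hGd
  rw [hFfun]
  have h2F := greenA hR1 hFdiff
  have h2G := greenA hR1 hGd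
  -- integrability of the boundary integrands
  have hcirc : Continuous fun t : ℝ => Complex.exp (Complex.I * t) := by fun_prop
  have hwmem : MapsTo (fun t : ℝ => Complex.exp (Complex.I * t)) (uIcc (0:ℝ) (2*π))
      (Metric.ball (0:ℂ) R) := by
    intro t _
    rw [Metric.mem_ball, dist_zero_right, norm_exp_I]
    exact hR1
  have haux : ∀ f : ℂ → ℂ, DifferentiableOn ℂ f (Metric.ball 0 R) →
      IntervalIntegrable (fun t : ℝ => Complex.exp (Complex.I * t) *
        ((starRingEnd ℂ) (f (Complex.exp (Complex.I * t))) *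
          deriv f (Complex.exp (Complex.I * t)))) volume 0 (2*π) := by
    intro f hf
    have hAf := hf.analyticOnNhd Metric.isOpen_ball
    apply ContinuousOn.intervalIntegrable
    apply ContinuousOn.mul hcirc.continuousOn
    apply ContinuousOn.mul
    · exact Complex.continuous_conj.comp_continuousOn
        (hAf.continuousOn.comp hcirc.continuousOn hwmem)
    · exact hAf.deriv.continuousOn.comp hcirc.continuousOn hwmem
  have hIF := haux _ hFdiff
  have hIG := haux _ hGd
  -- pointwise boundary identity
  have hpt : ∀ t ∈ uIcc (0:ℝ) (2*π),
      (Complex.exp (Complex.I * t) *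
          ((starRingEnd ℂ) ((fun z => (∏ j, (z - α j) / (1 - (starRingEnd ℂ) (α j) * z)) * G z)
            (Complex.exp (Complex.I * t))) *
            deriv (fun z => (∏ j, (z - α j) / (1 - (starRingEnd ℂ) (α j) * z)) * G z)
              (Complex.exp (Complex.I * t)))
        - Complex.exp (Complex.I * t) *
          ((starRingEnd ℂ) (G (Complex.exp (Complex.I * t))) *
            deriv G (Complex.exp (Complex.I * t))))
      = ((‖G (Complex.exp (Complex.I * t))‖ ^ 2 *
          ∑ j, (1 - ‖α j‖ ^ 2) / ‖Complex.exp (Complex.I * t) - α j‖ ^ 2 : ℝ) : ℂ) := by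
    intro t _
    have hWball : Complex.exp (Complex.I * t) ∈ Metric.ball (0:ℂ) R := by
      rw [Metric.mem_ball, dist_zero_right, norm_exp_I]
      exact hR1
    have hGdAt : DifferentiableAt ℂ G (Complex.exp (Complex.I * t)) :=
      hGd.differentiableAt (Metric.isOpen_ball.mem_nhds hWball)
    exact boundary_pt α hα G (Complex.exp (Complex.I * t)) (norm_exp_I t) hGdAt
  -- combine
  have hC : ((2 * ∫ z in Metric.ball (0:ℂ) 1,
        ‖deriv (fun z => (∏ j, (z - α j) / (1 - (starRingEnd ℂ) (α j) * z)) * G z) z‖ ^ 2 : ℝ) : ℂ)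
      - ((2 * ∫ z in Metric.ball (0:ℂ) 1, ‖deriv G z‖ ^ 2 : ℝ) : ℂ)
      = ((∫ t in (0:ℝ)..(2*π), ‖G (Complex.exp (Complex.I * t))‖ ^ 2 *
          ∑ j, (1 - ‖α j‖ ^ 2) / ‖Complex.exp (Complex.I * t) - α j‖ ^ 2 : ℝ) : ℂ) := by
    rw [h2F, h2G, ← intervalIntegral.integral_sub hIF hIG, ← intervalIntegral.integral_ofReal]
    exact intervalIntegral.integral_congr hpt
  have hCr : 2 * (∫ z in Metric.ball (0:ℂ) 1,
        ‖deriv (fun z => (∏ j, (z - α j) / (1 - (starRingEnd ℂ) (α j) * z)) * G z) z‖ ^ 2)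
      - 2 * (∫ z in Metric.ball (0:ℂ) 1, ‖deriv G z‖ ^ 2)
      = ∫ t in (0:ℝ)..(2*π), ‖G (Complex.exp (Complex.I * t))‖ ^ 2 *
          ∑ j, (1 - ‖α j‖ ^ 2) / ‖Complex.exp (Complex.I * t) - α j‖ ^ 2 := by
    exact_mod_cast hC
  linarith

end Main
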